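/- For every fixed γ ∈ (0, 1/2], the convex function f(t) = t^{1/γ} on [0,1] satisfies γ(f(0) + f(1)) + (1 − 2γ) f(1/2) > ∫_0^1 f(t) dt. Consequently, the lower bound M(γ, 1−2γ) = γ(f(a)+f(b)) + (1−2γ) f((a+b)/2) in the refined Hermite–Hadamard inequality fails for some convex function whenever γ > 0, so the left-hand side of the Hermite–Hadamard inequality cannot be improved in this form in general. -/

import Mathlib

open MeasureTheory intervalIntegral

/-- **The lower Hermite–Hadamard bound cannot be improved.** For every fixed
`γ ∈ (0, 1/2]`, the function `f t = t^(1/γ)` is convex on `[0,1]` and satisfies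
`γ (f 0 + f 1) + (1 - 2γ) f (1/2) > ∫_0^1 f`, so the improved lower bound
`M(γ, 1-2γ) ≤ (1/(b-a)) ∫_a^b f` fails for some convex `f` whenever `γ > 0`. -/
theorem stmt_16 (γ : ℝ) (hγ : γ ∈ Set.Ioc 0 (1 / 2)) :
    ConvexOn ℝ (Set.Icc 0 1) (fun t : ℝ => t ^ (1 / γ)) ∧
    γ * ((0:ℝ) ^ (1 / γ) + (1:ℝ) ^ (1 / γ)) +
        (1 - 2 * γ) * ((1 / 2 : ℝ) ^ (1 / γ)) >
      ∫ t in (0:ℝ)..1, t ^ (1 / γ) := by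
  obtain ⟨hγ0, hγ2⟩ := hγ
  have hp : (2:ℝ) ≤ 1 / γ := by
    rw [le_div_iff₀ hγ0]; linarith
  have hp1 : (1:ℝ) ≤ 1 / γ := by linarith
  have hp0 : (0:ℝ) < 1 / γ := by linarith
  constructor
  · exact (convexOn_rpow hp1).subset (Set.Icc_subset_Ici_self) (convex_Icc 0 1)
  · have hint : (∫ t in (0:ℝ)..1, t ^ (1 / γ)) = (1 ^ (1/γ + 1) - 0 ^ (1/γ + 1)) / (1/γ + 1) :=
      integral_rpow (Or.inl (by linarith))
    rw [hint]
    rw [Real.zero_rpow (by positivity), Real.one_rpow, Real.zero_rpow (by positivity),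
      Real.one_rpow]
    have h1 : (1 - 0) / (1/γ + 1) = γ / (1 + γ) := by
      field_simp
      norm_num
    rw [h1]
    have h2 : γ / (1 + γ) < γ := by
      rw [div_lt_iff₀ (by linarith)]
      nlinarith
    have h3 : (0:ℝ) ≤ (1 - 2 * γ) * ((1 / 2 : ℝ) ^ (1 / γ)) := by
      apply mul_nonneg (by linarith)
      positivity
    nlinarith
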